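/- Let μ* be an upward continuous outer measure on a set X with 0 < μ*(X), let κ be a cardinal with 𝔬(X, μ*) = |X| = κ, and assume there exists a κ-Lusin set. Then GES(X, μ*) fails. -/

import Mathlib

open MeasureTheory Filter Set
open Topology
open scoped ENNReal

namespace Stmt12Aux


noncomputable def dig (n : ℕ) (x : ℝ) : ℤ := ⌊x * 2 ^ n⌋ % 2

noncomputable def cnt (n : ℕ) (x : ℝ) : ℕ :=
  ((Finset.Icc 1 n).filter (fun m => dig m x = 1)).card

noncomputable def f (n : ℕ) (x : ℝ) : ℝ :=
  if dig n x = 1 then 1 / (cnt n x : ℝ) else 0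

lemma dig_eq_zero_or_one (n : ℕ) (x : ℝ) : dig n x = 0 ∨ dig n x = 1 :=
  Int.emod_two_eq _

lemma f_nonneg (n : ℕ) (x : ℝ) : 0 ≤ f n x := by
  unfold f; split
  · positivity
  · exact le_rfl

lemma cnt_mono {m n : ℕ} (h : m ≤ n) (x : ℝ) : cnt m x ≤ cnt n x := by
  apply Finset.card_le_card
  exact Finset.filter_subset_filter _ (Finset.Icc_subset_Icc_right h)

lemma dyadic_of_digits_zero {x : ℝ} {N : ℕ} (h : ∀ l, N ≤ l → dig l x = 0) :
    ∃ k : ℤ, x = (k : ℝ) / 2 ^ N := by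
  set a : ℤ := ⌊x * 2 ^ N⌋ with ha
  have key : ∀ j : ℕ, ⌊x * 2 ^ (N + j)⌋ = a * 2 ^ j := by
    intro j
    induction j with
    | zero => simp [ha]
    | succ j ih =>
      have h2 : x * 2 ^ (N + (j + 1)) = (x * 2 ^ (N + j)) * 2 := by ring
      set y := x * 2 ^ (N + j) with hy
      have hfl : ((⌊y⌋ : ℝ)) ≤ y := Int.floor_le y
      have hfu : y < ⌊y⌋ + 1 := Int.lt_floor_add_one y
      have hl : (2 * ⌊y⌋ : ℤ) ≤ ⌊y * 2⌋ := by
        apply Int.le_floor.2; push_cast; nlinarith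
      have hu : ⌊y * 2⌋ < 2 * ⌊y⌋ + 2 := by
        apply Int.floor_lt.2; push_cast; nlinarith
      have hd : ⌊y * 2⌋ % 2 = 0 := by
        have h3 := h (N + (j + 1)) (by omega)
        rwa [dig, h2] at h3
      have h4 : ⌊y * 2⌋ = 2 * ⌊y⌋ := by omega
      rw [h2, h4, ih]; ring
  refine ⟨a, ?_⟩
  have h2 : (a : ℝ) ≤ x * 2 ^ N := Int.floor_le _
  have h3 : x * 2 ^ N = a := by
    by_contra hne
    have hpos : 0 < x * 2 ^ N - a := by
      rcases lt_or_eq_of_le h2 with h' | h'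
      · linarith
      · exact absurd h'.symm hne
    obtain ⟨j, hj⟩ := exists_pow_lt_of_lt_one hpos (by norm_num : (1 : ℝ) / 2 < 1)
    have h5 := Int.lt_floor_add_one (x * 2 ^ (N + j))
    rw [key j] at h5
    push_cast at h5
    rw [pow_add] at h5
    have hp : (0 : ℝ) < 2 ^ j := by positivity
    have h6 : (x * 2 ^ N - a) * 2 ^ j < 1 := by nlinarith
    have h7 : ((1 : ℝ) / 2) ^ j = 1 / 2 ^ j := by rw [div_pow, one_pow]
    rw [h7] at hj
    rw [div_lt_iff₀ hp] at hj
    nlinarith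
  rw [eq_div_iff (by positivity : (2 : ℝ) ^ N ≠ 0)]
  linarith

lemma tendsto_f (x : ℝ) : Tendsto (fun n => f n x) atTop (𝓝 0) := by
  by_cases hfin : ∃ N, ∀ l, N ≤ l → dig l x = 0
  · obtain ⟨N, hN⟩ := hfin
    apply Tendsto.congr' _ (tendsto_const_nhds (x := (0 : ℝ)))
    filter_upwards [eventually_ge_atTop N] with n hn
    simp [f, hN n hn]
  · push_neg at hfin
    have hfin' : ∀ N : ℕ, ∃ l, N ≤ l ∧ dig l x = 1 := by
      intro N
      obtain ⟨l, hl, hl0⟩ := hfin N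
      exact ⟨l, hl, (dig_eq_zero_or_one l x).resolve_left hl0⟩
    have hub : ∀ K : ℕ, ∃ n, K ≤ cnt n x := by
      intro K
      induction K with
      | zero => exact ⟨0, Nat.zero_le _⟩
      | succ K ih =>
        obtain ⟨n, hn⟩ := ih
        obtain ⟨l, hl, hl1⟩ := hfin' (n + 1)
        refine ⟨l, ?_⟩
        classical
        have hnot : l ∉ (Finset.Icc 1 n).filter (fun m => dig m x = 1) := by
          simp only [Finset.mem_filter, Finset.mem_Icc]
          rintro ⟨⟨-, h2⟩, -⟩; omega
        have hsub : insert l ((Finset.Icc 1 n).filter (fun m => dig m x = 1)) ⊆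
            (Finset.Icc 1 l).filter (fun m => dig m x = 1) := by
          intro m hm
          simp only [Finset.mem_insert, Finset.mem_filter, Finset.mem_Icc] at hm ⊢
          rcases hm with rfl | ⟨⟨h1, h2⟩, h3⟩
          · exact ⟨⟨by omega, le_refl _⟩, hl1⟩
          · exact ⟨⟨h1, by omega⟩, h3⟩
        have hcard := Finset.card_le_card hsub
        rw [Finset.card_insert_of_notMem hnot] at hcard
        have : cnt n x + 1 ≤ cnt l x := hcard
        omega
    rw [Metric.tendsto_atTop]
    intro ε hε
    obtain ⟨K, hK⟩ := exists_nat_one_div_lt hε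
    obtain ⟨N, hN⟩ := hub (K + 1)
    refine ⟨N, fun n hn => ?_⟩
    have h1 : K + 1 ≤ cnt n x := le_trans hN (cnt_mono hn x)
    rw [Real.dist_eq, sub_zero, abs_of_nonneg (f_nonneg n x)]
    have h2 : f n x ≤ 1 / (cnt n x : ℝ) := by
      unfold f; split
      · exact le_rfl
      · positivity
    have h3 : (1 : ℝ) / (cnt n x : ℝ) ≤ 1 / (K + 1 : ℝ) := by
      apply one_div_le_one_div_of_le (by positivity)
      exact_mod_cast h1
    calc f n x ≤ 1 / (cnt n x : ℝ) := h2
      _ ≤ 1 / (K + 1 : ℝ) := h3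
      _ < ε := by exact_mod_cast hK

lemma digits_zero_on_interval {j T : ℕ} (m : ℤ) {x : ℝ}
    (hx1 : (m : ℝ) / 2 ^ j < x) (hx2 : x < (m : ℝ) / 2 ^ j + 1 / 2 ^ T) :
    ∀ l, j < l → l ≤ T → dig l x = 0 := by
  intro l hjl hlT
  have e1 : (2 : ℝ) ^ l = 2 ^ j * 2 ^ (l - j) := by
    rw [← pow_add]; congr 1; omega
  have hjp : (0 : ℝ) < 2 ^ j := by positivity
  have hljp : (0 : ℝ) < 2 ^ (l - j) := by positivity
  have hm : (m : ℝ) < x * 2 ^ j := (div_lt_iff₀ hjp).1 hx1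
  have hfloor : ⌊x * 2 ^ l⌋ = m * 2 ^ (l - j) := by
    rw [Int.floor_eq_iff]
    constructor
    · push_cast
      rw [e1]
      nlinarith [mul_pos (sub_pos.2 hm) hljp]
    · push_cast
      have hx2' : x * 2 ^ l < ((m : ℝ) / 2 ^ j + 1 / 2 ^ T) * 2 ^ l :=
        mul_lt_mul_of_pos_right hx2 (by positivity)
      have hTl : (2 : ℝ) ^ l ≤ 2 ^ T := by
        apply pow_le_pow_right₀ (by norm_num) hlT
      have hTp : (0 : ℝ) < 2 ^ T := by positivity
      have h1 : ((m : ℝ) / 2 ^ j) * 2 ^ l = m * 2 ^ (l - j) := by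
        rw [e1]; field_simp
      have h2 : (1 / (2:ℝ) ^ T) * 2 ^ l ≤ 1 := by
        rw [div_mul_eq_mul_div, one_mul, div_le_one hTp]; exact hTl
      nlinarith
  obtain ⟨k, hk⟩ : ∃ k, l - j = k + 1 := ⟨l - j - 1, by omega⟩
  rw [dig, hfloor, hk, pow_succ, ← mul_assoc]
  exact Int.mul_emod_left _ _

lemma nowhereDense_D (N : ℕ → ℕ) :
    IsNowhereDense {x : ℝ | ∀ K : ℕ, K ≤ cnt (N K) x} := by
  classical
  set D := {x : ℝ | ∀ K : ℕ, K ≤ cnt (N K) x} with hD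
  have key : ∀ a b : ℝ, a < b → ∃ c d : ℝ, a < c ∧ c < d ∧ d < b ∧ ∀ x ∈ Ioo c d, x ∉ D := by
    intro a b hab
    obtain ⟨j, hj⟩ := pow_unbounded_of_one_lt (2 / (b - a)) (one_lt_two (α := ℝ))
    have hjp : (0 : ℝ) < 2 ^ j := by positivity
    have hj2 : 2 / 2 ^ j < b - a := by
      rw [div_lt_iff₀ hjp]
      rw [div_lt_iff₀ (by linarith)] at hj
      nlinarith
    set m : ℤ := ⌊a * 2 ^ j⌋ + 1 with hm
    set c := (m : ℝ) / 2 ^ j with hc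
    have hm' : ((m : ℤ) : ℝ) = (⌊a * 2 ^ j⌋ : ℝ) + 1 := by rw [hm]; push_cast; ring
    have hc1 : a < c := by
      rw [hc, lt_div_iff₀ hjp, hm']
      have := Int.lt_floor_add_one (a * 2 ^ j)
      linarith
    have hc2 : c ≤ a + 1 / 2 ^ j := by
      rw [hc, div_le_iff₀ hjp, hm']
      have := Int.floor_le (a * 2 ^ j)
      have h1 : (a + 1 / 2 ^ j) * 2 ^ j = a * 2 ^ j + 1 := by field_simp
      rw [h1]; linarith
    set K := j + 1 with hK
    set T := max (N K) (j + 1) with hT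
    have hjT : j < T := lt_of_lt_of_le (by omega) (le_max_right _ _)
    set d := c + 1 / 2 ^ T with hd
    have hTj : (1 : ℝ) / 2 ^ T ≤ 1 / 2 ^ j := by
      apply one_div_le_one_div_of_le hjp
      apply pow_le_pow_right₀ (by norm_num) (le_of_lt hjT)
    have hdb : d < b := by
      rw [hd]
      have : (2 : ℝ) / 2 ^ j = 1 / 2 ^ j + 1 / 2 ^ j := by ring
      linarith
    have hcd : c < d := by
      rw [hd]
      have hp : (0:ℝ) < 1 / 2 ^ T := by positivity
      linarith
    refine ⟨c, d, hc1, hcd, hdb, ?_⟩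
    intro x hx hxD
    have hzero := digits_zero_on_interval m hx.1 (by rw [← hc, ← hd]; exact hx.2)
    have hcnt : cnt T x ≤ j := by
      have hsub : (Finset.Icc 1 T).filter (fun m' => dig m' x = 1) ⊆ Finset.Icc 1 j := by
        intro l hl
        simp only [Finset.mem_filter, Finset.mem_Icc] at hl ⊢
        obtain ⟨⟨h1, h2⟩, h3⟩ := hl
        refine ⟨h1, ?_⟩
        by_contra h4
        push_neg at h4
        rw [hzero l h4 h2] at h3
        exact absurd h3 (by norm_num)
      calc cnt T x ≤ (Finset.Icc 1 j).card := Finset.card_le_card hsub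
        _ = j := by rw [Nat.card_Icc]; omega
    have h5 := hxD K
    have h6 := cnt_mono (le_max_left (N K) (j + 1)) x
    rw [← hT] at h6
    omega
  rw [IsNowhereDense]
  by_contra h
  obtain ⟨x, hx⟩ := nonempty_iff_ne_empty.2 h
  have hxc : Metric.ball x (1 : ℝ) ∩ interior (closure D) ∈ 𝓝 x := by
    exact Filter.inter_mem (Metric.ball_mem_nhds x one_pos) (isOpen_interior.mem_nhds hx)
  obtain ⟨ε, hε, hball⟩ := Metric.mem_nhds_iff.1 hxc
  have hsub : Ioo (x - ε) (x + ε) ⊆ closure D := by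
    rw [← Real.ball_eq_Ioo]
    exact fun y hy => interior_subset (hball hy).2
  obtain ⟨c, d, h1, h2, h3, h4⟩ := key (x - ε) (x + ε) (by linarith)
  obtain ⟨y, hy1, hy2⟩ := exists_between h2
  have hyc : y ∈ closure D := hsub ⟨by linarith, by linarith⟩
  rw [mem_closure_iff] at hyc
  obtain ⟨z, hz1, hz2⟩ := hyc (Ioo c d) isOpen_Ioo ⟨hy1, hy2⟩
  exact h4 z hz1 hz2

lemma isMeagre_of_countable {s : Set ℝ} (hs : s.Countable) : IsMeagre s := by
  rw [isMeagre_iff_countable_union_isNowhereDense]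
  refine ⟨(fun x => ({x} : Set ℝ)) '' s, ?_, hs.image _, ?_⟩
  · rintro t ⟨x, -, rfl⟩
    rw [IsNowhereDense, closure_singleton, interior_singleton]
  · intro x hx
    exact ⟨{x}, ⟨x, hx, rfl⟩, rfl⟩

lemma nd_isMeagre {s : Set ℝ} (hs : IsNowhereDense s) : IsMeagre s := by
  rw [isMeagre_iff_countable_union_isNowhereDense]
  exact ⟨{s}, by simpa, countable_singleton s, by simp⟩


lemma meagre_of_unif {S : Set ℝ} (h : TendstoUniformlyOn f 0 atTop S) : IsMeagre S := by
  classical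
  rw [Metric.tendstoUniformlyOn_iff] at h
  have H : ∀ K : ℕ, ∃ N : ℕ, ∀ n ≥ N, ∀ x ∈ S, f n x < 1 / (K + 1 : ℝ) := by
    intro K
    have h1 := h (1 / (K + 1 : ℝ)) (by positivity)
    rw [eventually_atTop] at h1
    obtain ⟨N, hN⟩ := h1
    refine ⟨N, fun n hn x hx => ?_⟩
    have h2 := hN n hn x hx
    rwa [Pi.zero_apply, Real.dist_eq, zero_sub, abs_neg, abs_of_nonneg (f_nonneg n x)] at h2
  choose N₀ hN₀ using H
  set N : ℕ → ℕ := fun K => max 1 (N₀ K) with hNdef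
  set Q : Set ℝ := {x | ∃ (k : ℤ) (n : ℕ), x = (k : ℝ) / 2 ^ n} with hQdef
  set D : Set ℝ := {x : ℝ | ∀ K : ℕ, K ≤ cnt (N K) x} with hDdef
  have hQc : Q.Countable := by
    have hsub : Q ⊆ Set.range (fun p : ℤ × ℕ => ((p.1 : ℝ) / 2 ^ p.2 : ℝ)) := by
      rintro x ⟨k, n, rfl⟩; exact ⟨(k, n), rfl⟩
    exact (countable_range _).mono hsub
  have hsub : S ⊆ Q ∪ D := by
    intro x hx
    by_cases hxQ : x ∈ Q
    · exact Or.inl hxQ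
    refine Or.inr (fun K => ?_)
    have hex : ∃ l, N K ≤ l ∧ dig l x = 1 := by
      by_contra hno
      push_neg at hno
      have hz : ∀ l, N K ≤ l → dig l x = 0 :=
        fun l hl => (dig_eq_zero_or_one l x).resolve_right (hno l hl)
      obtain ⟨k, hk⟩ := dyadic_of_digits_zero hz
      exact hxQ ⟨k, _, hk⟩
    set n := Nat.find hex with hn
    obtain ⟨hn1, hn2⟩ := Nat.find_spec hex
    have hfn : f n x < 1 / (K + 1 : ℝ) :=
      hN₀ K n (le_trans (le_max_right _ _) hn1) x hx
    have hn0 : 1 ≤ n := le_trans (le_max_left _ _) hn1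
    have hcntpos : 1 ≤ cnt n x := by
      apply Finset.card_pos.2
      exact ⟨n, by simp only [Finset.mem_filter, Finset.mem_Icc]; exact ⟨⟨hn0, le_rfl⟩, hn2⟩⟩
    have hfeq : f n x = 1 / (cnt n x : ℝ) := if_pos hn2
    rw [hfeq] at hfn
    have hcpos : (0 : ℝ) < (cnt n x : ℝ) := by exact_mod_cast hcntpos
    have hlt : (K + 1 : ℝ) < (cnt n x : ℝ) := lt_of_one_div_lt_one_div hcpos hfn
    have hlt' : K + 1 < cnt n x := by exact_mod_cast hlt
    have hsub2 : (Finset.Icc 1 n).filter (fun m => dig m x = 1) ⊆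
        insert n ((Finset.Icc 1 (N K)).filter (fun m => dig m x = 1)) := by
      intro l hl
      simp only [Finset.mem_filter, Finset.mem_Icc] at hl
      obtain ⟨⟨h1, h2⟩, h3⟩ := hl
      rcases eq_or_lt_of_le h2 with h | h
      · simp [h]
      · have hmin := Nat.find_min hex h
        have hlm : l < N K := by
          by_contra h'
          push_neg at h'
          exact hmin ⟨h', h3⟩
        simp only [Finset.mem_insert, Finset.mem_filter, Finset.mem_Icc]
        exact Or.inr ⟨⟨h1, le_of_lt hlm⟩, h3⟩
    have hc1 : cnt n x ≤ (insert n ((Finset.Icc 1 (N K)).filter (fun m => dig m x = 1))).card :=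
      Finset.card_le_card hsub2
    have hc2 := Finset.card_insert_le n ((Finset.Icc 1 (N K)).filter (fun m => dig m x = 1))
    have hc3 : cnt n x ≤ cnt (N K) x + 1 := le_trans hc1 hc2
    omega
  have hmQD : IsMeagre (Q ∪ D) := by
    have h1 : IsMeagre Q := isMeagre_of_countable hQc
    have h2 : IsMeagre D := nd_isMeagre (nowhereDense_D N)
    have h3 : Q ∪ D = ⋃ b : ℕ, (if b = 0 then Q else D) := by
      apply subset_antisymm
      · rintro x (hx | hx)
        · exact mem_iUnion.2 ⟨0, by simpa⟩
        · exact mem_iUnion.2 ⟨1, by simpa⟩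
      · rintro x hx
        obtain ⟨b, hb⟩ := mem_iUnion.1 hx
        by_cases h : b = 0
        · rw [h] at hb; simp at hb; exact Or.inl hb
        · simp [h] at hb; exact Or.inr hb
    rw [h3]
    apply isMeagre_iUnion
    intro b
    by_cases h : b = 0 <;> simp [h, h1, h2]
  exact hmQD.mono hsub

lemma ennreal_sSup_Iio {a : ℝ≥0∞} (ha : 0 < a) : sSup (Set.Iio a) = a := by
  apply le_antisymm (sSup_le fun b hb => hb.le)
  by_contra h
  push_neg at h
  obtain ⟨c, hc1, hc2⟩ := exists_between h
  exact absurd (le_sSup (show c ∈ Iio a from hc2)) (not_le.2 hc1)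


end Stmt12Aux

/-- `μ` is an upward continuous outer measure. -/
def UpCont {X : Type*} (μ : OuterMeasure X) : Prop :=
  ∀ A : ℕ → Set X,
    Tendsto (fun n => μ (⋃ k < n, A k)) atTop (nhds (μ (⋃ n, A n)))

/-- `GES(X, μ*)`: for every pointwise vanishing sequence `F` of real-valued functions on
`X` and each `M < μ*(X)` there is `A ⊆ X` with `μ*(A) > M` on which `F` converges
uniformly to `0`. -/
def GES {X : Type*} (μ : OuterMeasure X) : Prop :=
  ∀ F : ℕ → X → ℝ, (∀ x, Tendsto (fun n => F n x) atTop (nhds 0)) →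
    ∀ M < μ Set.univ, ∃ A : Set X, M < μ A ∧ TendstoUniformlyOn F 0 atTop A

/-- `𝔬(X, μ*)`: the least cardinality of a subset of `X` of full outer measure. -/
noncomputable def oNum {X : Type*} (μ : OuterMeasure X) : Cardinal :=
  sInf {c | ∃ Y : Set X, μ Y = μ Set.univ ∧ Cardinal.mk Y = c}

/-- A `κ`-Lusin set: a subset of `ℝ` of cardinality `κ` all of whose meager subsets have
cardinality less than `κ`. -/
def IsLusinSet (κ : Cardinal) (L : Set ℝ) : Prop :=
  Cardinal.mk L = κ ∧ ∀ M ⊆ L, IsMeagre M → Cardinal.mk M < κ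

/-- If `0 < μ*(X)`, `𝔬(X, μ*) = |X| = κ` and there exists a `κ`-Lusin
set, then `GES(X, μ*)` fails. -/
theorem stmt12 {X : Type u} (μ : OuterMeasure X) (hμ : UpCont μ)
    (hpos : 0 < μ Set.univ) (κ : Cardinal.{0})
    (ho : oNum μ = Cardinal.mk X)
    (hκ : Cardinal.lift.{0} (Cardinal.mk X) = Cardinal.lift.{u} κ)
    (hL : ∃ L : Set ℝ, IsLusinSet κ L) :
    ¬ GES μ := by
  intro hGES
  obtain ⟨L, hLκ, hLusin⟩ := hL
  have hmk : Cardinal.lift.{0} (Cardinal.mk X) = Cardinal.lift.{u} (Cardinal.mk ↥L) := by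
    rw [hLκ, hκ]
  obtain ⟨g⟩ := Cardinal.lift_mk_eq'.1 hmk
  set e : X → ℝ := fun x => ((g x : ↥L) : ℝ) with he
  have hinj : Function.Injective e := by
    intro a b hab
    exact g.injective (Subtype.ext hab)
  set F : ℕ → X → ℝ := fun n x => Stmt12Aux.f n (e x) with hF
  have hFptw : ∀ x, Tendsto (fun n => F n x) atTop (𝓝 0) := fun x => Stmt12Aux.tendsto_f (e x)
  obtain ⟨u, hu_mono, hu_tendsto, hu_mem⟩ :=
    exists_seq_tendsto_sSup (α := ℝ≥0∞) (S := Set.Iio (μ Set.univ)) ⟨0, hpos⟩ (OrderTop.bddAbove _)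
  rw [Stmt12Aux.ennreal_sSup_Iio hpos] at hu_tendsto
  have hA : ∀ n, ∃ A : Set X, u n < μ A ∧ TendstoUniformlyOn F 0 atTop A :=
    fun n => hGES F hFptw (u n) (hu_mem n)
  choose A hAμ hAu using hA
  set B := ⋃ n, A n with hB
  have hv_mono : Monotone (fun n => μ (⋃ k < n, A k)) := by
    intro a b hab
    apply μ.mono
    exact Set.biUnion_subset_biUnion_left (fun k hk => lt_of_lt_of_le hk hab)
  have hvB := hμ A
  have hle : ∀ n, u n < μ B := by
    intro n
    calc u n < μ (A n) := hAμ n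
      _ ≤ μ (⋃ k < n + 1, A k) := μ.mono (Set.subset_biUnion_of_mem (Nat.lt_succ_self n))
      _ ≤ μ B := hv_mono.ge_of_tendsto hvB (n + 1)
  have hμB : μ B = μ Set.univ :=
    le_antisymm (μ.mono (subset_univ B))
      (le_of_tendsto hu_tendsto (Eventually.of_forall fun n => (hle n).le))
  have h1 : oNum μ ≤ Cardinal.mk ↥B := csInf_le' ⟨B, hμB, rfl⟩
  have h2 : Cardinal.mk ↥B = Cardinal.mk X :=
    le_antisymm (Cardinal.mk_set_le B) (ho ▸ h1)
  have hmeag : ∀ n, IsMeagre (e '' A n) := by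
    intro n
    apply Stmt12Aux.meagre_of_unif
    intro V hV
    filter_upwards [hAu n V hV] with m hm
    rintro y ⟨x, hx, rfl⟩
    simpa using hm x hx
  have hBm : IsMeagre (e '' B) := by
    rw [hB, Set.image_iUnion]
    exact isMeagre_iUnion hmeag
  have hsubL : e '' B ⊆ L := by
    rintro y ⟨x, -, rfl⟩
    exact (g x).2
  have hlt := hLusin (e '' B) hsubL hBm
  have hcard : Cardinal.lift.{u} (Cardinal.mk ↥(e '' B)) = Cardinal.lift.{u} κ := by
    rw [Cardinal.mk_image_eq_lift e B hinj, h2]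
    exact hκ
  have heq : Cardinal.mk ↥(e '' B) = κ := Cardinal.lift_inj.1 hcard
  rw [heq] at hlt
  exact lt_irrefl κ hlt
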